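/- Fix T > 0 and let ψ = (ψ_i)_{i ≥ 1} be a sequence of càdlàg paths ψ_i : [0,T] → ℝ with ψ_i(0) ≤ 1 for every i. Then there exists a solution (φ, η) of the infinite-dimensional Skorokhod problem for ψ associated with the reflection matrix R_∞. -/

import Mathlib

open Set Filter MeasureTheory Topology

/-- A path `ψ : [0,T] → ℝ` is càdlàg: right-continuous on `[0,T)` (within the domain `[0,T]`)
and has left limits (within the domain) at every point of `(0,T]`. -/
def CadlagOn (T : ℝ) (ψ : ℝ → ℝ) : Prop :=
  (∀ t ∈ Ico (0 : ℝ) T, ContinuousWithinAt ψ (Icc t T) t) ∧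
  (∀ t ∈ Ioc (0 : ℝ) T, ∃ l : ℝ, Tendsto ψ (nhdsWithin t (Ico 0 t)) (nhds l))

/-- The Lebesgue–Stieltjes measure on `[0,T]` induced by `η` assigns zero mass to the set `A`.
It is encoded via the (unique) Stieltjes function on `ℝ` obtained by extending `η` from `[0,T]`
to `ℝ` constantly to the left of `0` and to the right of `T`. -/
def ZeroMassOn (T : ℝ) (η : ℝ → ℝ) (A : Set ℝ) : Prop :=
  ∃ f : StieltjesFunction ℝ, (∀ t : ℝ, f t = η (max 0 (min t T))) ∧ f.measure A = 0

/-- `(φ, η)` solves the infinite-dimensional Skorokhod problem on `[0,T]` for `ψ`, associated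
with the reflection matrix `R_∞`.  Components are indexed by `ℕ`, where Lean index `i`
corresponds to the paper's coordinate `i + 1` (so `φ 0` is the paper's `φ_1`, etc.), and the
paper's `η_0 ≡ 0` is built into the equation for the first coordinate. -/
def SolvesSPInf (T : ℝ) (ψ φ η : ℕ → ℝ → ℝ) : Prop :=
  (∀ t ∈ Set.Icc (0 : ℝ) T, φ 0 t = ψ 0 t - η 0 t) ∧
  (∀ i : ℕ, ∀ t ∈ Set.Icc (0 : ℝ) T, φ (i + 1) t = ψ (i + 1) t + η i t - η (i + 1) t) ∧
  (∀ i : ℕ, ∀ t ∈ Set.Icc (0 : ℝ) T, φ i t ≤ 1) ∧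
  (∀ i : ℕ, η i 0 = 0 ∧ MonotoneOn (η i) (Set.Icc 0 T) ∧
    (∀ t ∈ Set.Icc (0 : ℝ) T, ContinuousWithinAt (η i) (Set.Icc t T) t) ∧
    ZeroMassOn T (η i) {t ∈ Set.Icc (0 : ℝ) T | φ i t < 1})

open Function in
lemma cadlag_bddAbove (T : ℝ) (ψ : ℝ → ℝ) (h : CadlagOn T ψ) :
    BddAbove (ψ '' Icc 0 T) := by
  refine isCompact_Icc.induction_on (p := fun s => BddAbove (ψ '' s)) (by simp) ?_ ?_ ?_
  · exact fun s t hst ht => ht.mono (image_mono hst)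
  · intro s t hs ht; rw [image_union]; exact hs.union ht
  · intro y hy
    have hsplit : Icc (0:ℝ) T = Ico 0 y ∪ Icc y T := (Ico_union_Icc_eq_Icc hy.1 hy.2).symm
    have right : ∃ s1 ∈ 𝓝[Icc y T] y, BddAbove (ψ '' s1) := by
      rcases eq_or_lt_of_le hy.2 with hyT | hyT
      · refine ⟨Icc y T, self_mem_nhdsWithin, ?_⟩
        rw [hyT, Icc_self]; simp
      · have h1 : ψ ⁻¹' Iio (ψ y + 1) ∈ 𝓝[Icc y T] y :=
          (h.1 y ⟨hy.1, hyT⟩) (Iio_mem_nhds (by linarith))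
        refine ⟨ψ ⁻¹' Iio (ψ y + 1), h1, ⟨ψ y + 1, ?_⟩⟩
        rintro _ ⟨w, hw, rfl⟩; exact le_of_lt hw
    have left : ∃ s2 ∈ 𝓝[Ico 0 y] y, BddAbove (ψ '' s2) := by
      rcases eq_or_lt_of_le hy.1 with hy0 | hy0
      · refine ⟨∅, ?_, by simp⟩
        rw [← hy0, Ico_self, nhdsWithin_empty]; exact mem_bot
      · obtain ⟨l, hl⟩ := h.2 y ⟨hy0, hy.2⟩
        have h1 : ψ ⁻¹' Iio (l + 1) ∈ 𝓝[Ico 0 y] y := hl (Iio_mem_nhds (by linarith))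
        refine ⟨ψ ⁻¹' Iio (l + 1), h1, ⟨l + 1, ?_⟩⟩
        rintro _ ⟨w, hw, rfl⟩; exact le_of_lt hw
    obtain ⟨s1, hs1, hb1⟩ := right
    obtain ⟨s2, hs2, hb2⟩ := left
    refine ⟨s1 ∪ s2, ?_, by show BddAbove (ψ '' (s1 ∪ s2)); rw [image_union]; exact hb1.union hb2⟩
    rw [hsplit, nhdsWithin_union]
    exact mem_sup.2 ⟨mem_of_superset hs2 subset_union_right,
      mem_of_superset hs1 subset_union_left⟩

noncomputable def skorMap (T : ℝ) (x : ℝ → ℝ) : ℝ → ℝ :=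
  fun t => sSup ((fun s => max (x s - 1) 0) '' Icc 0 (max 0 (min t T)))

open Function in
lemma skorMap_spec (T : ℝ) (hT : 0 < T) (x : ℝ → ℝ)
    (hrc : ∀ t ∈ Ico (0:ℝ) T, ContinuousWithinAt x (Icc t T) t)
    (hx0 : x 0 ≤ 1) (hbdd : BddAbove (x '' Icc 0 T)) :
    Monotone (skorMap T x) ∧ skorMap T x 0 = 0 ∧
    (∀ t, T ≤ t → skorMap T x t = skorMap T x T) ∧
    (∀ t, ContinuousWithinAt (skorMap T x) (Ici t) t) ∧
    (∀ t ∈ Icc (0:ℝ) T, x t - skorMap T x t ≤ 1) ∧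
    ZeroMassOn T (skorMap T x) {t ∈ Icc (0:ℝ) T | x t - skorMap T x t < 1} := by
  set g : ℝ → ℝ := fun s => max (x s - 1) 0 with hgdef
  set c : ℝ → ℝ := fun t => max 0 (min t T) with hcdef
  set η : ℝ → ℝ := skorMap T x with hηdef
  have hηeq : ∀ t, η t = sSup (g '' Icc 0 (c t)) := fun t => rfl
  -- clamp facts
  have hc0 : ∀ t, 0 ≤ c t := fun t => le_max_left _ _
  have hcT : ∀ t, c t ≤ T := fun t => max_le hT.le (min_le_right _ _)
  have hcid : ∀ t ∈ Icc (0:ℝ) T, c t = t := by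
    intro t ht
    simp only [hcdef]
    rw [min_eq_left ht.2, max_eq_right ht.1]
  have hcmono : Monotone c := by
    intro s t hst
    exact max_le_max le_rfl (min_le_min hst le_rfl)
  have hcle : ∀ s, 0 ≤ s → c s ≤ s := fun s hs =>
    max_le hs (min_le_left _ _)
  -- boundedness of g
  obtain ⟨M, hM⟩ := hbdd
  have hgB : ∀ u ∈ Icc (0:ℝ) T, g u ≤ max (M - 1) 0 := by
    intro u hu
    have : x u ≤ M := hM (mem_image_of_mem _ hu)
    exact max_le_max (by linarith) le_rfl
  have hbddg : ∀ t, BddAbove (g '' Icc 0 (c t)) := by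
    intro t
    refine ⟨max (M - 1) 0, ?_⟩
    rintro _ ⟨u, hu, rfl⟩
    exact hgB u ⟨hu.1, hu.2.trans (hcT t)⟩
  have hne : ∀ t, (g '' Icc 0 (c t)).Nonempty :=
    fun t => ⟨g 0, mem_image_of_mem _ ⟨le_rfl, hc0 t⟩⟩
  have hle_eta : ∀ t, ∀ u ∈ Icc (0:ℝ) (c t), g u ≤ η t := by
    intro t u hu
    rw [hηeq]
    exact le_csSup (hbddg t) (mem_image_of_mem _ hu)
  have heta_le : ∀ t b, (∀ u ∈ Icc (0:ℝ) (c t), g u ≤ b) → η t ≤ b := by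
    intro t b hb
    rw [hηeq]
    refine csSup_le (hne t) ?_
    rintro _ ⟨u, hu, rfl⟩; exact hb u hu
  have hg0 : g 0 = 0 := max_eq_right (by linarith)
  have hgnn : ∀ u, 0 ≤ g u := fun u => le_max_right _ _
  have hmono : Monotone η := by
    intro s t hst
    rw [hηeq, hηeq]
    exact csSup_le_csSup (hbddg t) (hne s)
      (image_mono (Icc_subset_Icc le_rfl (hcmono hst)))
  have hnn : ∀ t, 0 ≤ η t := fun t => le_trans (hgnn 0) (hle_eta t 0 ⟨le_rfl, hc0 t⟩)
  have heta0 : η 0 = 0 := by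
    refine le_antisymm (heta_le 0 0 ?_) (hnn 0)
    intro u hu
    have hc00 : c 0 = 0 := hcid 0 ⟨le_rfl, hT.le⟩
    have : u = 0 := le_antisymm (hc00 ▸ hu.2) hu.1
    rw [this, hg0]
  have hclamp : ∀ t, η (c t) = η t := by
    intro t
    rw [hηeq, hηeq, hcid (c t) ⟨hc0 t, hcT t⟩]
  have hconstT : ∀ t, T ≤ t → η t = η T := by
    intro t ht
    rw [hηeq, hηeq]
    have h1 : c t = T := by
      simp only [hcdef]; rw [min_eq_right ht, max_eq_right hT.le]
    have h2 : c T = T := hcid T ⟨hT.le, le_rfl⟩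
    rw [h1, h2]
  have hconst0 : ∀ t, t ≤ 0 → η t = η 0 := by
    intro t ht
    rw [hηeq, hηeq]
    have h1 : c t = 0 := by
      simp only [hcdef]; rw [max_eq_left (le_trans (min_le_left _ _) ht)]
    have h2 : c 0 = 0 := hcid 0 ⟨le_rfl, hT.le⟩
    rw [h1, h2]
  have hgle : ∀ u ∈ Icc (0:ℝ) T, g u ≤ η u := by
    intro u hu
    exact hle_eta u u ⟨hu.1, (hcid u hu).ge⟩
  have hphile : ∀ t ∈ Icc (0:ℝ) T, x t - η t ≤ 1 := by
    intro t ht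
    have h1 := hgle t ht
    have h2 : x t - 1 ≤ g t := le_max_left _ _
    linarith
  -- key right-neighborhood bound
  have haux : ∀ t ∈ Ico (0:ℝ) T, ∀ b, η t ≤ b → x t - 1 < b →
      ∃ δ > 0, ∀ s, t ≤ s → s < t + δ → η s ≤ b := by
    intro t ht b hb1 hb2
    have h1 := Metric.continuousWithinAt_iff.1 (hrc t ht)
    obtain ⟨δ, hδ, hδ'⟩ := h1 (b - (x t - 1)) (by linarith)
    refine ⟨δ, hδ, fun s hts hsδ => heta_le s b (fun u hu => ?_)⟩
    have h0b : 0 ≤ b := le_trans (hnn t) hb1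
    rcases le_or_gt u t with h | h
    · have hgu : g u ≤ η t := by
        refine hle_eta t u ⟨hu.1, ?_⟩
        rw [hcid t ⟨ht.1, ht.2.le⟩]; exact h
      linarith
    · have huT : u ≤ T := le_trans hu.2 (hcT s)
      have hcs : c s ≤ s := hcle s (ht.1.trans hts)
      have hud : dist u t < δ := by
        rw [Real.dist_eq, abs_of_nonneg (by linarith)]
        have := hu.2
        linarith
      have hx := hδ' (⟨h.le, huT⟩ : u ∈ Icc t T) hud
      rw [Real.dist_eq] at hx
      have h3 : x u - x t < b - (x t - 1) := lt_of_le_of_lt (le_abs_self _) hx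
      exact max_le (by linarith) h0b
  -- right continuity
  have hrcη : ∀ t, ContinuousWithinAt η (Ici t) t := by
    intro t
    rcases lt_or_ge t 0 with h | h
    · refine continuousWithinAt_const.congr_of_eventuallyEq ?_ (hconst0 t h.le)
      filter_upwards [nhdsWithin_le_nhds (Iio_mem_nhds h)] with s hs
      rw [hconst0 s (le_of_lt hs)]
    rcases le_or_gt T t with h2 | h2
    · refine continuousWithinAt_const.congr (fun s hs => ?_) (hconstT t h2)
      rw [hconstT s (h2.trans hs)]
    · refine Metric.continuousWithinAt_iff.2 (fun ε hε => ?_)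
      obtain ⟨δ, hδ, hb⟩ := haux t ⟨h, h2⟩ (η t + ε / 2) (by linarith)
        (by have := hphile t ⟨h, h2.le⟩; linarith)
      refine ⟨δ, hδ, fun s hs hd => ?_⟩
      have hs' : t ≤ s := hs
      have h1 : η t ≤ η s := hmono hs'
      have h2' : η s ≤ η t + ε / 2 := by
        refine hb s hs ?_
        rw [Real.dist_eq, abs_of_nonneg (by linarith : (0:ℝ) ≤ s - t)] at hd
        linarith
      rw [Real.dist_eq, abs_of_nonneg (by linarith)]
      linarith
  refine ⟨hmono, heta0, hconstT, hrcη, hphile, ?_⟩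
  -- zero mass part
  set f : StieltjesFunction ℝ := ⟨η, hmono, hrcη⟩ with hfdef
  have hcoe : (f : ℝ → ℝ) = η := rfl
  set U : Set ℝ := {t ∈ Icc (0:ℝ) T | x t - η t < 1} with hUdef
  -- flatness to the right on U
  have hflat : ∀ t ∈ U, ∃ δ > 0, ∀ s, t ≤ s → s < t + δ → η s = η t := by
    rintro t ⟨htI, htU⟩
    rcases eq_or_lt_of_le htI.2 with hteq | hlt
    · exact ⟨1, one_pos, fun s hts _ => by
        rw [hconstT s (hteq ▸ hts), ← hteq]⟩
    · obtain ⟨δ, hδ, hb⟩ := haux t ⟨htI.1, hlt⟩ (η t) le_rfl (by linarith)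
      exact ⟨δ, hδ, fun s hts hsδ => le_antisymm (hb s hts hsδ) (hmono hts)⟩
  -- no left jump on U
  have hnojump : ∀ t ∈ U, leftLim η t = η t := by
    rintro t ⟨htI, htU⟩
    rcases eq_or_lt_of_le htI.1 with hteq | hlt
    · have hne' : (𝓝[<] t) ≠ ⊥ := (nhdsLT_neBot t).ne
      refine leftLim_eq_of_tendsto ?_
      have hev : ∀ᶠ s in 𝓝[<] t, η t = η s := by
        filter_upwards [self_mem_nhdsWithin] with s hs
        rw [hconst0 s (by rw [← hteq] at hs; exact le_of_lt hs), ← hteq, ← hconst0 t (le_of_eq hteq.symm)]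
      exact Tendsto.congr' hev tendsto_const_nhds
    · have hL1 : leftLim η t ≤ η t := hmono.leftLim_le le_rfl
      rcases eq_or_lt_of_le (hnn t) with hz | hz
      · refine le_antisymm hL1 ?_
        have h1 : η 0 ≤ leftLim η t := hmono.le_leftLim hlt
        rw [heta0] at h1; linarith
      · have hb : η t ≤ max (leftLim η t) (g t) := by
          refine heta_le t _ (fun u hu => ?_)
          rw [hcid t htI] at hu
          rcases eq_or_lt_of_le hu.2 with hut | hut
          · rw [hut]; exact le_max_right _ _
          · exact le_trans (le_trans (hgle u ⟨hu.1, hut.le.trans htI.2⟩)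
              (hmono.le_leftLim hut)) (le_max_left _ _)
        have hgt : g t < η t := max_lt (by linarith) hz
        rcases le_total (leftLim η t) (g t) with hcc | hcc
        · rw [max_eq_right hcc] at hb; linarith
        · rw [max_eq_left hcc] at hb; exact le_antisymm hL1 hb
  -- measure facts
  have hsing : ∀ t ∈ U, f.measure {t} = 0 := by
    intro t ht
    rw [f.measure_singleton, hcoe, hnojump t ht, sub_self, ENNReal.ofReal_zero]
  choose! δ hδ using hflat
  have hδpos : ∀ t ∈ U, 0 < δ t := fun t ht => (hδ t ht).1
  have hδflat : ∀ t ∈ U, ∀ s, t ≤ s → s < t + δ t → η s = η t := fun t ht => (hδ t ht).2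
  have hIoo : ∀ t ∈ U, f.measure (Ioo t (t + δ t)) = 0 := by
    intro t ht
    rw [f.measure_Ioo, hcoe]
    have hll : leftLim η (t + δ t) = η t := by
      have hne' : (𝓝[<] (t + δ t)) ≠ ⊥ := (nhdsLT_neBot _).ne
      refine leftLim_eq_of_tendsto ?_
      have hev : ∀ᶠ s in 𝓝[<] (t + δ t), η t = η s := by
        filter_upwards [Ioo_mem_nhdsLT
          (show t < t + δ t by linarith [hδpos t ht])] with s hs
        exact (hδflat t ht s hs.1.le hs.2).symm
      exact Tendsto.congr' hev tendsto_const_nhds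
    rw [hll, sub_self, ENNReal.ofReal_zero]
  -- the open flat region W
  set W : Set ℝ := ⋃ i : {t // t ∈ U}, Ioo (i : ℝ) ((i : ℝ) + δ i) with hWdef
  obtain ⟨Tc, hTc, hTcU⟩ := TopologicalSpace.isOpen_iUnion_countable
    (fun i : {t // t ∈ U} => Ioo (i : ℝ) ((i : ℝ) + δ i)) (fun _ => isOpen_Ioo)
  have hWnull : f.measure W = 0 := by
    rw [hWdef, ← hTcU]
    rw [measure_biUnion_null_iff hTc]
    exact fun i _ => hIoo i i.2
  have hUWc : (U \ W).Countable := by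
    have hq : ∀ t ∈ U \ W, ∃ q : ℚ, (t : ℝ) < q ∧ (q : ℝ) < t + δ t := by
      intro t ht
      exact exists_rat_btwn (lt_add_of_pos_right t (hδpos t ht.1))
    choose! q hq1 hq2 using hq
    refine Set.MapsTo.countable_of_injOn (Set.mapsTo_univ q (U \ W)) ?_ countable_univ
    intro a ha b hb hab
    by_contra hne
    rcases lt_or_gt_of_ne hne with h | h
    · have hbW : b ∉ Ioo a (a + δ a) := fun hmem => hb.2 (mem_iUnion.2 ⟨⟨a, ha.1⟩, hmem⟩)
      have : a + δ a ≤ b := by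
        by_contra hcon
        exact hbW ⟨h, lt_of_not_ge hcon⟩
      have := hq2 a ha
      have := hq1 b hb
      have : (q a : ℝ) < q b := by linarith
      rw [hab] at this; exact lt_irrefl _ this
    · have haW : a ∉ Ioo b (b + δ b) := fun hmem => ha.2 (mem_iUnion.2 ⟨⟨b, hb.1⟩, hmem⟩)
      have : b + δ b ≤ a := by
        by_contra hcon
        exact haW ⟨h, lt_of_not_ge hcon⟩
      have := hq2 b hb
      have := hq1 a ha
      have : (q b : ℝ) < q a := by linarith
      rw [hab] at this; exact lt_irrefl _ this
  have hUWnull : f.measure (U \ W) = 0 := by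
    rw [← Set.biUnion_of_singleton (U \ W), measure_biUnion_null_iff hUWc]
    exact fun t ht => hsing t ht.1
  have hUnull : f.measure U = 0 := by
    have hsub : U ⊆ W ∪ (U \ W) := by
      intro t ht
      by_cases h : t ∈ W
      · exact Or.inl h
      · exact Or.inr ⟨ht, h⟩
    refine le_antisymm ?_ zero_le
    calc f.measure U ≤ f.measure (W ∪ (U \ W)) := measure_mono hsub
      _ ≤ f.measure W + f.measure (U \ W) := measure_union_le _ _
      _ = 0 := by rw [hWnull, hUWnull, add_zero]
  exact ⟨f, fun t => (hclamp t).symm, hUnull⟩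

noncomputable def skEta (T : ℝ) (ψ : ℕ → ℝ → ℝ) : ℕ → ℝ → ℝ
  | 0 => skorMap T (ψ 0)
  | (i+1) => skorMap T (fun t => ψ (i+1) t + skEta T ψ i t)

noncomputable def skX (T : ℝ) (ψ : ℕ → ℝ → ℝ) : ℕ → ℝ → ℝ
  | 0 => ψ 0
  | (i+1) => fun t => ψ (i+1) t + skEta T ψ i t


/-- Existence of solutions to the infinite-dimensional Skorokhod problem: for every sequence
of càdlàg paths `ψ_i` on `[0,T]` with `ψ_i(0) ≤ 1`, there is a solution `(φ, η)`. -/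
theorem skorokhod_inf_dim_existence (T : ℝ) (hT : 0 < T) (ψ : ℕ → ℝ → ℝ)
    (hcad : ∀ i : ℕ, CadlagOn T (ψ i)) (hψ0 : ∀ i : ℕ, ψ i 0 ≤ 1) :
    ∃ φ η : ℕ → ℝ → ℝ, SolvesSPInf T ψ φ η := by
  have hbddψ : ∀ i, BddAbove (ψ i '' Icc 0 T) :=
    fun i => cadlag_bddAbove T (ψ i) (hcad i)
  set η : ℕ → ℝ → ℝ := skEta T ψ with hηdef
  have hspec : ∀ i, Monotone (η i) ∧ η i 0 = 0 ∧ (∀ t, T ≤ t → η i t = η i T) ∧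
      (∀ t, ContinuousWithinAt (η i) (Ici t) t) ∧
      (∀ t ∈ Icc (0:ℝ) T, skX T ψ i t - η i t ≤ 1) ∧
      ZeroMassOn T (η i) {t ∈ Icc (0:ℝ) T | skX T ψ i t - η i t < 1} := by
    intro i
    induction i with
    | zero => exact skorMap_spec T hT (ψ 0) ((hcad 0).1) (hψ0 0) (hbddψ 0)
    | succ k ih =>
      obtain ⟨hm, h0, hTc, hrc', hle, hzm⟩ := ih
      refine skorMap_spec T hT (fun t => ψ (k+1) t + η k t) ?_ ?_ ?_
      · intro t ht
        exact ((hcad (k+1)).1 t ht).add ((hrc' t).mono (fun s hs => hs.1))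
      · show ψ (k+1) 0 + η k 0 ≤ 1
        rw [h0, add_zero]; exact hψ0 (k+1)
      · obtain ⟨M, hM⟩ := hbddψ (k+1)
        refine ⟨M + η k T, ?_⟩
        rintro _ ⟨u, hu, rfl⟩
        exact add_le_add (hM (mem_image_of_mem _ hu)) (hm hu.2)
  refine ⟨fun i => Nat.casesOn i (fun t => ψ 0 t - η 0 t)
    (fun k t => ψ (k+1) t + η k t - η (k+1) t), η, ?_, ?_, ?_, ?_⟩
  · intro t _; rfl
  · intro i t _; rfl
  · intro i t ht
    cases i with
    | zero => exact (hspec 0).2.2.2.2.1 t ht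
    | succ k => exact (hspec (k+1)).2.2.2.2.1 t ht
  · intro i
    obtain ⟨hm, h0, hTc, hrc', hle, hzm⟩ := hspec i
    refine ⟨h0, hm.monotoneOn _, fun t _ => (hrc' t).mono (fun s hs => hs.1), ?_⟩
    cases i with
    | zero => exact hzm
    | succ k => exact hzm
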